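/- Let h: [−B,B] → ℝ be m-strongly convex (h''(x) ≥ m > 0) with minimizer x⋆ ∈ [−B,B] satisfying x⋆ ≥ γ/2 for some γ > 0, and let d be a random variable on [−B,B] with density proportional to e^{−h(d)}. Then Pr[d ≤ 0] ≤ exp(−m·γ²/8). -/

import Mathlib

open Set MeasureTheory Real

/-- One-sided tail bound for a strongly log-concave density on `[-B, B]` whose mode
is at least `γ/2`: the probability of landing in `[-B, 0]` is at most
`exp(-m γ²/8)`. -/
theorem stmt12 (B γ m : ℝ) (hB : 0 < B) (hγ : 0 < γ) (hm : 0 < m)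
    (h : ℝ → ℝ) (hsmooth : ContDiffOn ℝ 2 h (Set.Icc (-B) B))
    (hconv : ∀ x ∈ Set.Icc (-B) B, m ≤ iteratedDerivWithin 2 h (Set.Icc (-B) B) x)
    (xstar : ℝ) (hx1 : xstar ∈ Set.Icc (-B) B)
    (hxmin : ∀ x ∈ Set.Icc (-B) B, h xstar ≤ h x)
    (hxγ : γ / 2 ≤ xstar) :
    (∫ x in (-B)..0, Real.exp (-h x)) / (∫ x in (-B)..B, Real.exp (-h x))
      ≤ Real.exp (-(m * γ ^ 2 / 8)) := by
  have hBB : -B < B := by linarith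
  have hS : UniqueDiffOn ℝ (Set.Icc (-B) B) := uniqueDiffOn_Icc hBB
  have hγB : γ / 2 ≤ B := le_trans hxγ hx1.2
  have hcont : ContinuousOn h (Set.Icc (-B) B) := hsmooth.continuousOn
  have hdiff : DifferentiableOn ℝ h (Set.Icc (-B) B) :=
    hsmooth.differentiableOn two_ne_zero
  have hd1 : ContDiffOn ℝ 1 (derivWithin h (Set.Icc (-B) B)) (Set.Icc (-B) B) :=
    hsmooth.derivWithin hS (by norm_num)
  have hd1' : DifferentiableOn ℝ (derivWithin h (Set.Icc (-B) B)) (Set.Icc (-B) B) :=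
    hd1.differentiableOn one_ne_zero
  -- convexity of g = h - (m/2)(x - xstar)^2
  have hgconv : ConvexOn ℝ (Set.Icc (-B) B)
      (fun x => h x - m / 2 * (x - xstar) ^ 2) := by
    apply convexOn_of_hasDerivWithinAt2_nonneg (convex_Icc _ _)
      (f' := fun x => derivWithin h (Set.Icc (-B) B) x - m * (x - xstar))
      (f'' := fun x => iteratedDerivWithin 2 h (Set.Icc (-B) B) x - m)
    · exact hcont.sub ((continuous_const.mul
        ((continuous_id.sub continuous_const).pow 2)).continuousOn)
    · intro x hx
      have hxS : x ∈ Set.Icc (-B) B := interior_subset hx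
      have h1 : HasDerivWithinAt h (derivWithin h (Set.Icc (-B) B) x)
          (interior (Set.Icc (-B) B)) x :=
        ((hdiff x hxS).hasDerivWithinAt).mono interior_subset
      have h2 : HasDerivAt (fun y => m / 2 * (y - xstar) ^ 2) (m * (x - xstar)) x := by
        have := (((hasDerivAt_id x).sub_const xstar).pow 2).const_mul (m / 2)
        exact this.congr_deriv (by simp only [id]; norm_num; ring)
      exact h1.sub (h2.hasDerivWithinAt)
    · intro x hx
      have hxS : x ∈ Set.Icc (-B) B := interior_subset hx
      have heq : iteratedDerivWithin 2 h (Set.Icc (-B) B) x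
          = derivWithin (derivWithin h (Set.Icc (-B) B)) (Set.Icc (-B) B) x := by
        rw [iteratedDerivWithin_succ, iteratedDerivWithin_one]
      have h1 : HasDerivWithinAt (derivWithin h (Set.Icc (-B) B))
          (iteratedDerivWithin 2 h (Set.Icc (-B) B) x)
          (interior (Set.Icc (-B) B)) x := by
        rw [heq]
        exact ((hd1' x hxS).hasDerivWithinAt).mono interior_subset
      have h2 : HasDerivAt (fun y => m * (y - xstar)) m x := by
        have := ((hasDerivAt_id x).sub_const xstar).const_mul m
        exact this.congr_deriv (by ring)
      exact h1.sub h2.hasDerivWithinAt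
    · intro x hx
      have := hconv x (interior_subset hx)
      linarith
  -- key pointwise inequality
  have key : ∀ x, -B ≤ x → x < 0 → h (x + γ / 2) + m * γ ^ 2 / 8 ≤ h x := by
    intro x hxl hxr
    have ha : x ∈ Set.Icc (-B) B := ⟨hxl, by linarith⟩
    have hb : x + γ / 2 ∈ Set.Icc (-B) B := ⟨by linarith, by linarith⟩
    have hab : x < x + γ / 2 := by linarith
    have hbc : x + γ / 2 < xstar := by linarith
    have hslope := hgconv.slope_mono_adjacent ha hx1 hab hbc
    have he : x + γ / 2 - x = γ / 2 := by ring
    rw [he] at hslope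
    have hγ2 : (0:ℝ) < γ / 2 := by linarith
    have hD : (0:ℝ) < xstar - (x + γ / 2) := by linarith
    rw [div_le_div_iff₀ hγ2 hD] at hslope
    have hmin := hxmin (x + γ / 2) hb
    nlinarith [sq_nonneg (xstar - (x + γ / 2)), mul_pos hD hD,
      mul_pos hm (mul_pos hγ2 hD), sq_nonneg (x + γ / 2 - xstar)]
  -- integrability facts
  have hce : ContinuousOn (fun x => Real.exp (-h x)) (Set.Icc (-B) B) :=
    Real.continuous_exp.comp_continuousOn hcont.neg
  have hint : IntervalIntegrable (fun x => Real.exp (-h x)) volume (-B) B :=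
    (hce.mono (by rw [Set.uIcc_of_le hBB.le])).intervalIntegrable
  have hZpos : 0 < ∫ x in (-B)..B, Real.exp (-h x) :=
    intervalIntegral.intervalIntegral_pos_of_pos_on hint (fun x _ => Real.exp_pos _) hBB
  -- shifted integrand continuity/integrability on [-B, 0]
  have hmaps : Set.MapsTo (fun x => x + γ / 2) (Set.Icc (-B) 0) (Set.Icc (-B) B) := by
    intro x hx
    exact ⟨by linarith [hx.1], by linarith [hx.2]⟩
  have hcs : ContinuousOn (fun x => Real.exp (-(m * γ ^ 2 / 8)) * Real.exp (-h (x + γ / 2)))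
      (Set.Icc (-B) 0) := by
    apply ContinuousOn.mul continuousOn_const
    exact (hce.comp ((continuous_id.add continuous_const).continuousOn) hmaps)
  have hB0 : -B ≤ (0:ℝ) := by linarith
  have hint1 : IntervalIntegrable (fun x => Real.exp (-h x)) volume (-B) 0 :=
    hint.mono_set (by
      rw [Set.uIcc_of_le hB0, Set.uIcc_of_le hBB.le]
      exact Set.Icc_subset_Icc le_rfl hB.le)
  have hint2 : IntervalIntegrable
      (fun x => Real.exp (-(m * γ ^ 2 / 8)) * Real.exp (-h (x + γ / 2))) volume (-B) 0 :=
    (hcs.mono (by rw [Set.uIcc_of_le hB0])).intervalIntegrable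
  -- a.e. comparison on [-B,0]
  have hae : (fun x => Real.exp (-h x)) ≤ᵐ[volume.restrict (Set.Icc (-B) (0:ℝ))]
      fun x => Real.exp (-(m * γ ^ 2 / 8)) * Real.exp (-h (x + γ / 2)) := by
    have h0 : ∀ᵐ (x : ℝ) ∂volume, x ≠ 0 := by
      rw [MeasureTheory.ae_iff]
      have hset : {x : ℝ | ¬ x ≠ 0} = {0} := by ext y; simp
      rw [hset]; exact measure_singleton 0
    filter_upwards [ae_restrict_mem measurableSet_Icc, MeasureTheory.ae_restrict_of_ae h0]
      with x hx hne
    have hxr : x < 0 := lt_of_le_of_ne hx.2 hne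
    have := key x hx.1 hxr
    rw [← Real.exp_add, Real.exp_le_exp]
    linarith
  have step1 : (∫ x in (-B)..0, Real.exp (-h x))
      ≤ ∫ x in (-B)..0, Real.exp (-(m * γ ^ 2 / 8)) * Real.exp (-h (x + γ / 2)) :=
    intervalIntegral.integral_mono_ae_restrict hB0 hint1 hint2 hae
  have step2 : (∫ x in (-B)..0, Real.exp (-(m * γ ^ 2 / 8)) * Real.exp (-h (x + γ / 2)))
      = Real.exp (-(m * γ ^ 2 / 8)) * ∫ x in (-B + γ / 2)..(γ / 2), Real.exp (-h x) := by
    rw [intervalIntegral.integral_const_mul]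
    congr 1
    have := intervalIntegral.integral_comp_add_right (a := -B) (b := 0)
      (fun x => Real.exp (-h x)) (γ / 2)
    simpa using this
  have step3 : (∫ x in (-B + γ / 2)..(γ / 2), Real.exp (-h x))
      ≤ ∫ x in (-B)..B, Real.exp (-h x) := by
    apply intervalIntegral.integral_mono_interval (by linarith) (by linarith) (by linarith)
    · filter_upwards with x using (Real.exp_pos _).le
    · exact hint
  rw [div_le_iff₀ hZpos]
  calc (∫ x in (-B)..0, Real.exp (-h x))
      ≤ Real.exp (-(m * γ ^ 2 / 8)) * ∫ x in (-B + γ / 2)..(γ / 2), Real.exp (-h x) := by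
        rw [← step2]; exact step1
    _ ≤ Real.exp (-(m * γ ^ 2 / 8)) * ∫ x in (-B)..B, Real.exp (-h x) := by
        apply mul_le_mul_of_nonneg_left step3 (Real.exp_pos _).le
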